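/- Let U be a nonempty finite type, X take values in {A,B}, and let p be a joint pmf of (U,X) with P(X=x, U=u)>0 for every u and x. Let Q be generated by the kernel w({x}|u,x) = π(x)/P(X=x|U=u), w(q'|u,x)=0 for the other singleton q', and w(qAB|u,x) = 1 − π(x)/P(X=x|U=u), where π(x) = min over u of P(X=x|U=u). Then the marginal distribution of Q satisfies P(Q={x}) = π(x) for each x ∈ {A,B} and P(Q=qAB) = 1 − π(A) − π(B); consequently the expected query length is E[ℓ(Q)] = 2 − π(A) − π(B). -/

import Mathlib

/-- The two sources. -/
inductive Src | A | B
deriving DecidableEq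

instance : Fintype Src where
  elems := {Src.A, Src.B}
  complete := by intro x; cases x <;> simp

/-- The three possible queries: only source A, only source B, or both. -/
inductive Qry | qA | qB | qAB
deriving DecidableEq

instance : Fintype Qry where
  elems := {Qry.qA, Qry.qB, Qry.qAB}
  complete := by intro x; cases x <;> simp

/-- The singleton query associated to a source. -/
def singletonQ : Src → Qry
  | Src.A => Qry.qA
  | Src.B => Qry.qB

/-- The conditional probability `P(X = x | U = u)` derived from the joint pmf `p` of `(U,X)`. -/
noncomputable def condP {U : Type} [Fintype U] (p : U → Src → ℝ) (x : Src) (u : U) : ℝ :=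
  p u x / (∑ x', p u x')

/-- `π(x) = min_u P(X = x | U = u)`. -/
noncomputable def piMin {U : Type} [Fintype U] [Nonempty U] (p : U → Src → ℝ) (x : Src) : ℝ :=
  Finset.univ.inf' Finset.univ_nonempty (fun u => condP p x u)

/-- The ON-OFF privacy query kernel: `w({x}|u,x) = π(x)/P(X=x|U=u)`, the other singleton gets
probability `0`, and `w(qAB|u,x) = 1 - π(x)/P(X=x|U=u)`. -/
noncomputable def kernel {U : Type} [Fintype U] [Nonempty U] (p : U → Src → ℝ)
    (u : U) (x : Src) (q : Qry) : ℝ :=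
  if q = singletonQ x then piMin p x / condP p x u
  else if q = Qry.qAB then 1 - piMin p x / condP p x u
  else 0


/-- The length (download cost) of each query. -/
noncomputable def len : Qry → ℝ
  | Qry.qA => 1
  | Qry.qB => 1
  | Qry.qAB => 2

/-- Under the ON-OFF privacy kernel, the marginal of `Q` is `P(Q={x}) = π(x)` and
`P(Q=qAB) = 1 - π(A) - π(B)`, so the expected query length is `2 - π(A) - π(B)`. -/
theorem kernel_marginal {U : Type} [Fintype U] [Nonempty U]
    (p : U → Src → ℝ)
    (hpos : ∀ u x, 0 < p u x)
    (hsum : ∑ u, ∑ x, p u x = 1) :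
    (∀ x : Src, ∑ u, ∑ x', p u x' * kernel p u x' (singletonQ x) = piMin p x) ∧
    (∑ u, ∑ x', p u x' * kernel p u x' Qry.qAB
      = 1 - piMin p Src.A - piMin p Src.B) ∧
    (∑ u, ∑ x', ∑ q, p u x' * kernel p u x' q * len q
      = 2 - piMin p Src.A - piMin p Src.B) := by
  have srcsum : ∀ f : Src → ℝ, ∑ x, f x = f Src.A + f Src.B := by
    intro f
    rw [show (Finset.univ : Finset Src) = {Src.A, Src.B} by decide]
    rw [Finset.sum_pair (by decide : Src.A ≠ Src.B)]
  have qrysum : ∀ f : Qry → ℝ, ∑ q, f q = f Qry.qA + f Qry.qB + f Qry.qAB := by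
    intro f
    rw [show (Finset.univ : Finset Qry) = {Qry.qA, Qry.qB, Qry.qAB} by decide]
    rw [Finset.sum_insert (by decide), Finset.sum_pair (by decide : Qry.qB ≠ Qry.qAB)]
    ring
  have hS : ∀ u : U, 0 < ∑ x', p u x' :=
    fun u => Finset.sum_pos (fun x _ => hpos u x) ⟨Src.A, Finset.mem_univ _⟩
  have key : ∀ (u : U) (x : Src),
      p u x * (piMin p x / condP p x u) = piMin p x * ∑ x', p u x' := by
    intro u x
    have h1 : p u x ≠ 0 := (hpos u x).ne'
    have h2 : (∑ x', p u x') ≠ 0 := (hS u).ne'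
    unfold condP
    field_simp
  have hsum' : ∑ u, ∑ x', p u x' = 1 := hsum
  have hsingle : ∀ x : Src, ∑ u, ∑ x', p u x' * kernel p u x' (singletonQ x) = piMin p x := by
    intro x
    have hinner : ∀ u : U, ∑ x', p u x' * kernel p u x' (singletonQ x)
        = piMin p x * ∑ x', p u x' := by
      intro u
      rw [srcsum (fun x' => p u x' * kernel p u x' (singletonQ x))]
      have kA := key u Src.A
      have kB := key u Src.B
      rw [srcsum (fun x' => p u x')] at kA kB ⊢
      rcases x with _ | _ <;> simp [kernel, singletonQ] <;> linarith
    calc ∑ u, ∑ x', p u x' * kernel p u x' (singletonQ x)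
        = ∑ u, piMin p x * ∑ x', p u x' := by
          exact Finset.sum_congr rfl fun u _ => hinner u
      _ = piMin p x * ∑ u, ∑ x', p u x' := by rw [Finset.mul_sum]
      _ = piMin p x := by rw [hsum', mul_one]
  refine ⟨hsingle, ?_, ?_⟩
  · have hinner : ∀ u : U, ∑ x', p u x' * kernel p u x' Qry.qAB
        = (1 - piMin p Src.A - piMin p Src.B) * ∑ x', p u x' := by
      intro u
      rw [srcsum (fun x' => p u x' * kernel p u x' Qry.qAB)]
      have kA := key u Src.A
      have kB := key u Src.B
      rw [srcsum (fun x' => p u x')] at kA kB ⊢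
      simp [kernel, singletonQ]
      linarith
    calc ∑ u, ∑ x', p u x' * kernel p u x' Qry.qAB
        = ∑ u, (1 - piMin p Src.A - piMin p Src.B) * ∑ x', p u x' :=
          Finset.sum_congr rfl fun u _ => hinner u
      _ = (1 - piMin p Src.A - piMin p Src.B) * ∑ u, ∑ x', p u x' := by
          rw [Finset.mul_sum]
      _ = _ := by rw [hsum', mul_one]
  · have hinner : ∀ u : U, ∑ x', ∑ q, p u x' * kernel p u x' q * len q
        = (2 - piMin p Src.A - piMin p Src.B) * ∑ x', p u x' := by
      intro u
      rw [srcsum (fun x' => ∑ q, p u x' * kernel p u x' q * len q)]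
      rw [qrysum (fun q => p u Src.A * kernel p u Src.A q * len q)]
      rw [qrysum (fun q => p u Src.B * kernel p u Src.B q * len q)]
      have kA := key u Src.A
      have kB := key u Src.B
      rw [srcsum (fun x' => p u x')] at kA kB ⊢
      simp [kernel, singletonQ, len]
      linarith
    calc ∑ u, ∑ x', ∑ q, p u x' * kernel p u x' q * len q
        = ∑ u, (2 - piMin p Src.A - piMin p Src.B) * ∑ x', p u x' :=
          Finset.sum_congr rfl fun u _ => hinner u
      _ = (2 - piMin p Src.A - piMin p Src.B) * ∑ u, ∑ x', p u x' := by
          rw [Finset.mul_sum]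
      _ = _ := by rw [hsum', mul_one]
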